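/- For n ≥ 3 and θ ∈ [π/3, π/2), let x_θ = cos θ · e₁ + sin θ · e₂ ∈ ℝⁿ and let Λ_θ be the lattice spanned over ℤ by e₁, x_θ, e₃, ..., eₙ. Then Λ_θ is well-rounded with all successive minima equal to 1, but Λ_θ is unstable: the rank-2 sublattice Ω_θ spanned by e₁ and x_θ satisfies det(Ω_θ)^{1/2} < det(Λ_θ)^{1/n}. -/

import Mathlib

/-- Euclidean norm on `Fin n → ℝ`. -/
noncomputable def enormEucl {n : ℕ} (x : Fin n → ℝ) : ℝ :=
  Real.sqrt (∑ i, x i ^ 2)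

/-- The lattice generated by the columns of `B`. -/
def latticeOf {n : ℕ} (B : Matrix (Fin n) (Fin n) ℝ) : Set (Fin n → ℝ) :=
  Set.range (fun v : Fin n → ℤ => B.mulVec (fun i => (v i : ℝ)))

/-- The `i`-th successive minimum of the lattice generated by `B`. -/
noncomputable def succMin {n : ℕ} (B : Matrix (Fin n) (Fin n) ℝ) (i : ℕ) : ℝ :=
  sInf {r : ℝ | 0 < r ∧ i ≤ Set.finrank ℝ {x | x ∈ latticeOf B ∧ enormEucl x ≤ r}}

/-- Covolume of the sublattice spanned by the family `w`, via the Gram determinant. -/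
noncomputable def subdet {n k : ℕ} (w : Fin k → (Fin n → ℝ)) : ℝ :=
  Real.sqrt (Matrix.det (Matrix.of fun i j => ∑ t, w i t * w j t))

lemma aux_sum_two {n : ℕ} (f : Fin n → ℝ) {i0 i1 : Fin n} (h : i0 ≠ i1)
    (hf : ∀ i, i ≠ i0 → i ≠ i1 → f i = 0) : ∑ i, f i = f i0 + f i1 := by
  refine ((Finset.sum_subset (Finset.subset_univ {i0, i1}) ?_).symm).trans
    (Finset.sum_pair h)
  intro x _ hx
  simp only [Finset.mem_insert, Finset.mem_singleton, not_or] at hx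
  exact hf x hx.1 hx.2

lemma aux_arith (c s : ℝ) (hc : 0 < c) (hc2 : c ≤ 1/2) (hpy : c^2 + s^2 = 1)
    (a b : ℤ) (hab : a ≠ 0 ∨ b ≠ 0) :
    (1:ℝ) ≤ ((a:ℝ) + (b:ℝ) * c)^2 + (b:ℝ)^2 * s^2 := by
  have ha1 : (a:ℝ) ≤ (a:ℝ)^2 := by
    have : a ≤ a^2 := by rcases le_or_gt a 0 with h | h <;> nlinarith
    exact_mod_cast this
  have ha2 : -(a:ℝ) ≤ (a:ℝ)^2 := by
    have : -a ≤ a^2 := by rcases le_or_gt a 0 with h | h <;> nlinarith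
    exact_mod_cast this
  have hb5 : b = 0 ∨ b = 1 ∨ b = -1 ∨ b ≤ -2 ∨ 2 ≤ b := by omega
  rcases hb5 with rfl | rfl | rfl | hb | hb
  · have ha : a ≠ 0 := by tauto
    have h1 : (1:ℤ) ≤ a^2 := by rcases (by omega : a ≤ -1 ∨ 1 ≤ a) with h|h <;> nlinarith
    have h1' : (1:ℝ) ≤ (a:ℝ)^2 := by exact_mod_cast h1
    push_cast
    nlinarith
  · push_cast
    nlinarith [mul_nonneg (by linarith : (0:ℝ) ≤ (a:ℝ)^2 - a) (by linarith : (0:ℝ) ≤ 1 - 2*c),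
      mul_nonneg (by linarith : (0:ℝ) ≤ (a:ℝ)^2 + a) (by linarith : (0:ℝ) ≤ 1 + 2*c)]
  · push_cast
    nlinarith [mul_nonneg (by linarith : (0:ℝ) ≤ (a:ℝ)^2 - a) (by linarith : (0:ℝ) ≤ 1 + 2*c),
      mul_nonneg (by linarith : (0:ℝ) ≤ (a:ℝ)^2 + a) (by linarith : (0:ℝ) ≤ 1 - 2*c)]
  · have hb4 : (4:ℝ) ≤ (b:ℝ)^2 := by
      have : (b:ℝ) ≤ -2 := by exact_mod_cast hb
      nlinarith
    have h34 : (3:ℝ)/4 ≤ s^2 := by nlinarith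
    nlinarith [sq_nonneg ((a:ℝ) + (b:ℝ)*c),
      mul_nonneg (by linarith : (0:ℝ) ≤ (b:ℝ)^2 - 4) (by linarith : (0:ℝ) ≤ s^2 - 3/4)]
  · have hb4 : (4:ℝ) ≤ (b:ℝ)^2 := by
      have : (2:ℝ) ≤ (b:ℝ) := by exact_mod_cast hb
      nlinarith
    have h34 : (3:ℝ)/4 ≤ s^2 := by nlinarith
    nlinarith [sq_nonneg ((a:ℝ) + (b:ℝ)*c),
      mul_nonneg (by linarith : (0:ℝ) ≤ (b:ℝ)^2 - 4) (by linarith : (0:ℝ) ≤ s^2 - 3/4)]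

theorem wr_unstable_family (n : ℕ) (hn : 3 ≤ n) (θ : ℝ)
    (hθ1 : Real.pi / 3 ≤ θ) (hθ2 : θ < Real.pi / 2)
    (xθ : Fin n → ℝ)
    (hx : xθ = fun i => if i = ⟨0, by omega⟩ then Real.cos θ
      else if i = ⟨1, by omega⟩ then Real.sin θ else 0)
    (e : Fin n → (Fin n → ℝ)) (he : e = fun j => Pi.single j 1)
    (B : Matrix (Fin n) (Fin n) ℝ)
    (hB : B = Matrix.of fun i j =>
      if j = ⟨0, by omega⟩ then e ⟨0, by omega⟩ i
      else if j = ⟨1, by omega⟩ then xθ i else e j i) :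
    (∀ i : ℕ, 1 ≤ i → i ≤ n → succMin B i = 1) ∧
    subdet ![e ⟨0, by omega⟩, xθ] ^ ((1 : ℝ) / 2) < |B.det| ^ ((1 : ℝ) / n) := by
  obtain ⟨m, rfl⟩ : ∃ m, n = m + 3 := ⟨n - 3, by omega⟩
  simp only [Fin.mk_zero, Fin.mk_one] at hx hB ⊢
  have hpi := Real.pi_pos
  have hθ0 : 0 < θ := lt_of_lt_of_le (by linarith) hθ1
  have hc : 0 < Real.cos θ := Real.cos_pos_of_mem_Ioo ⟨by linarith, hθ2⟩
  have hc2 : Real.cos θ ≤ 1/2 := by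
    have := Real.cos_le_cos_of_nonneg_of_le_pi (by positivity : (0:ℝ) ≤ Real.pi/3)
      (by linarith : θ ≤ Real.pi) hθ1
    rwa [Real.cos_pi_div_three] at this
  have hs : 0 < Real.sin θ := Real.sin_pos_of_pos_of_lt_pi hθ0 (by linarith)
  have hpy : Real.cos θ^2 + Real.sin θ^2 = 1 := by
    have := Real.sin_sq_add_cos_sq θ; linarith
  have hs1 : Real.sin θ < 1 := by nlinarith
  have h01 : (0 : Fin (m+3)) ≠ 1 := by simp [Fin.ext_iff]
  have hx0 : xθ 0 = Real.cos θ := by rw [hx]; simp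
  have hx1 : xθ 1 = Real.sin θ := by rw [hx]; simp [h01.symm]
  have hxo : ∀ i : Fin (m+3), i ≠ 0 → i ≠ 1 → xθ i = 0 := by
    intro i h0 h1; rw [hx]; simp [h0, h1]
  have hBij : ∀ i j : Fin (m+3), B i j = if j = 1 then xθ i else if i = j then 1 else 0 := by
    intro i j
    rw [hB, he]
    simp only [Matrix.of_apply]
    by_cases hj0 : j = 0
    · subst hj0
      simp [Pi.single_apply, h01]
    · by_cases hj1 : j = 1
      · subst hj1; simp [h01.symm]
      · simp [hj0, hj1, Pi.single_apply]
  have hmul : ∀ (v : Fin (m+3) → ℝ) (i), B.mulVec v i = xθ i * v 1 + (if i = 1 then 0 else v i) := by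
    intro v i
    simp only [Matrix.mulVec, dotProduct]
    by_cases hi : i = 1
    · subst hi
      rw [Finset.sum_eq_single (1 : Fin (m+3))]
      · rw [hBij]; simp
      · intro j _ hj
        rw [hBij]
        simp [hj, (Ne.symm hj : ¬(1:Fin (m+3)) = j)]
      · intro h; exact absurd (Finset.mem_univ _) h
    · rw [aux_sum_two _ (Ne.symm hi : (1:Fin (m+3)) ≠ i)]
      · rw [hBij, hBij]; simp [hi]
      · intro j hj1 hji
        rw [hBij]
        simp [hj1, (Ne.symm hji : ¬ i = j)]
  have hnormsq : ∀ v : Fin (m+3) → ℤ, (∃ j, v j ≠ 0) →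
      1 ≤ ∑ i, (B.mulVec (fun i => (v i : ℝ)) i)^2 := by
    intro v hv
    by_cases hA : ∃ j : Fin (m+3), j ≠ 0 ∧ j ≠ 1 ∧ v j ≠ 0
    · obtain ⟨j, hj0, hj1, hjv⟩ := hA
      have hxj : B.mulVec (fun i => (v i : ℝ)) j = (v j : ℝ) := by
        rw [hmul, hxo j hj0 hj1, if_neg hj1]; ring
      have h1 : (1:ℝ) ≤ (B.mulVec (fun i => (v i : ℝ)) j)^2 := by
        rw [hxj]
        have : (1:ℤ) ≤ (v j)^2 := by
          rcases (by omega : v j ≤ -1 ∨ 1 ≤ v j) with h|h <;> nlinarith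
        exact_mod_cast this
      exact le_trans h1 (Finset.single_le_sum
        (f := fun i => (B.mulVec (fun i => (v i : ℝ)) i)^2)
        (fun i _ => sq_nonneg _) (Finset.mem_univ j))
    · push_neg at hA
      have hab : v 0 ≠ 0 ∨ v 1 ≠ 0 := by
        by_contra hcon
        push_neg at hcon
        obtain ⟨j, hj⟩ := hv
        by_cases hj0 : j = 0
        · exact hj (hj0 ▸ hcon.1)
        · by_cases hj1 : j = 1
          · exact hj (hj1 ▸ hcon.2)
          · exact hj (hA j hj0 hj1)
      have h0 : B.mulVec (fun i => (v i : ℝ)) 0 = Real.cos θ * (v 1 : ℝ) + (v 0 : ℝ) := by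
        rw [hmul, hx0, if_neg h01]
      have h1' : B.mulVec (fun i => (v i : ℝ)) 1 = Real.sin θ * (v 1 : ℝ) := by
        rw [hmul, hx1, if_pos rfl, add_zero]
      have hsum : ∑ i, (B.mulVec (fun i => (v i : ℝ)) i)^2
          = (B.mulVec (fun i => (v i : ℝ)) 0)^2 + (B.mulVec (fun i => (v i : ℝ)) 1)^2 := by
        apply aux_sum_two _ h01
        intro i hi0 hi1
        rw [hmul, hxo i hi0 hi1, if_neg hi1, hA i hi0 hi1]
        norm_num
      rw [hsum, h0, h1']
      have hkey := aux_arith (Real.cos θ) (Real.sin θ) hc hc2 hpy (v 0) (v 1) hab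
      nlinarith [hkey]
  have hdetB : B.det = Real.sin θ := by
    rw [Matrix.det_of_upperTriangular]
    · rw [Finset.prod_eq_single (1 : Fin (m+3))]
      · rw [hBij]; simp [hx1]
      · intro i _ hi; rw [hBij]; simp [hi]
      · intro h; exact absurd (Finset.mem_univ _) h
    · intro i j hij
      rw [hBij]
      by_cases hj1 : j = 1
      · subst hj1
        rw [if_pos rfl]
        have hlt := (Fin.lt_def).1 hij
        apply hxo i
        · intro h; rw [h] at hlt; simp at hlt
        · intro h; rw [h] at hlt; simp at hlt
      · rw [if_neg hj1, if_neg]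
        intro h; rw [h] at hij; exact lt_irrefl _ hij
  have habs : |B.det| = Real.sin θ := by rw [hdetB, abs_of_pos hs]
  have hcol_mem : ∀ j : Fin (m+3), B.transpose j ∈ latticeOf B := by
    intro j
    refine ⟨Pi.single j 1, ?_⟩
    have hv : (fun i => ((Pi.single j 1 : Fin (m+3) → ℤ) i : ℝ)) = Pi.single j (1:ℝ) := by
      funext i; simp [Pi.single_apply, apply_ite]
    show B.mulVec (fun i => ((Pi.single j 1 : Fin (m+3) → ℤ) i : ℝ)) = B.transpose j
    rw [hv, Matrix.mulVec_single_one]; rfl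
  have hcol_norm : ∀ j : Fin (m+3), enormEucl (B.transpose j) = 1 := by
    intro j
    have hsum : ∑ i, (B.transpose j i)^2 = 1 := by
      by_cases hj : j = 1
      · subst hj
        have hcv : ∀ i, B.transpose 1 i = xθ i := fun i => by
          rw [Matrix.transpose_apply, hBij]; simp
        calc ∑ i, (B.transpose 1 i)^2 = ∑ i, (xθ i)^2 := Finset.sum_congr rfl (fun i _ => by rw [hcv])
          _ = (xθ 0)^2 + (xθ 1)^2 :=
            aux_sum_two _ h01 (fun i hi0 hi1 => by rw [hxo i hi0 hi1]; norm_num)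
          _ = 1 := by rw [hx0, hx1]; exact hpy
      · rw [Finset.sum_eq_single j]
        · rw [Matrix.transpose_apply, hBij, if_neg hj, if_pos rfl]; norm_num
        · intro i _ hij
          rw [Matrix.transpose_apply, hBij, if_neg hj, if_neg hij]; norm_num
        · intro h; exact absurd (Finset.mem_univ _) h
    unfold enormEucl
    rw [hsum, Real.sqrt_one]
  constructor
  · intro i hi1 hin
    unfold succMin
    have hset : {r : ℝ | 0 < r ∧ i ≤ Set.finrank ℝ {x | x ∈ latticeOf B ∧ enormEucl x ≤ r}}
        = Set.Ici 1 := by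
      ext r
      simp only [Set.mem_setOf_eq, Set.mem_Ici]
      constructor
      · rintro ⟨hr, hrk⟩
        by_contra hr1
        push_neg at hr1
        have hsub : {x | x ∈ latticeOf B ∧ enormEucl x ≤ r} ⊆ {0} := by
          rintro x ⟨⟨v, rfl⟩, hxr⟩
          by_cases hv : ∃ j, v j ≠ 0
          · exfalso
            have hge := hnormsq v hv
            have h1e : (1:ℝ) ≤ enormEucl (B.mulVec fun i => (v i : ℝ)) := by
              unfold enormEucl
              rw [show (1:ℝ) = Real.sqrt 1 from Real.sqrt_one.symm]
              exact Real.sqrt_le_sqrt hge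
            linarith
          · push_neg at hv
            have hv0 : (fun i => ((v i : ℝ))) = (0 : Fin (m+3) → ℝ) := by
              funext i; rw [hv i]; simp
            simp [Set.mem_singleton_iff, hv0, Matrix.mulVec_zero]
        have hspan : Submodule.span ℝ {x | x ∈ latticeOf B ∧ enormEucl x ≤ r} = ⊥ := by
          rw [← le_bot_iff]
          refine Submodule.span_le.2 ?_
          simpa using hsub
        have hz : Set.finrank ℝ {x | x ∈ latticeOf B ∧ enormEucl x ≤ r} = 0 := by
          unfold Set.finrank
          rw [hspan]
          exact finrank_bot ℝ _
        omega
      · intro hr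
        have hr0 : (0:ℝ) < r := lt_of_lt_of_le one_pos hr
        refine ⟨hr0, ?_⟩
        have hsub2 : Set.range B.transpose ⊆ {x | x ∈ latticeOf B ∧ enormEucl x ≤ r} := by
          rintro x ⟨j, rfl⟩
          exact ⟨hcol_mem j, by rw [hcol_norm j]; exact hr⟩
        have hunit : IsUnit B := (Matrix.isUnit_iff_isUnit_det B).2
          (by rw [hdetB]; exact isUnit_iff_ne_zero.2 (ne_of_gt hs))
        have hsurj : Function.Surjective B.mulVecLin := by
          intro y
          obtain ⟨x, hx'⟩ := (Matrix.mulVec_surjective_iff_isUnit.2 hunit) y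
          exact ⟨x, hx'⟩
        have htop : Submodule.span ℝ {x | x ∈ latticeOf B ∧ enormEucl x ≤ r} = ⊤ := by
          rw [eq_top_iff]
          calc (⊤ : Submodule ℝ (Fin (m+3) → ℝ))
              = LinearMap.range B.mulVecLin := (LinearMap.range_eq_top.2 hsurj).symm
            _ = Submodule.span ℝ (Set.range B.transpose) := Matrix.range_mulVecLin B
            _ ≤ _ := Submodule.span_mono hsub2
        have hfr : Set.finrank ℝ {x | x ∈ latticeOf B ∧ enormEucl x ≤ r} = m + 3 := by
          unfold Set.finrank
          rw [htop, finrank_top, Module.finrank_fin_fun]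
        omega
    rw [hset, csInf_Ici]
  · simp only [he]
    have hgram : subdet ![(Pi.single 0 1 : Fin (m+3) → ℝ), xθ] = Real.sin θ := by
      unfold subdet
      rw [Matrix.det_fin_two]
      simp only [Matrix.of_apply, Matrix.cons_val_zero, Matrix.cons_val_one, Matrix.head_cons]
      have s00 : ∑ t, (Pi.single 0 1 : Fin (m+3) → ℝ) t * (Pi.single 0 1 : Fin (m+3) → ℝ) t = 1 := by
        rw [Finset.sum_eq_single (0 : Fin (m+3))]
        · simp
        · intro t _ ht; simp [Pi.single_apply, ht]
        · intro h; exact absurd (Finset.mem_univ _) h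
      have s01 : ∑ t, (Pi.single 0 1 : Fin (m+3) → ℝ) t * xθ t = Real.cos θ := by
        rw [Finset.sum_eq_single (0 : Fin (m+3))]
        · simp [hx0]
        · intro t _ ht; simp [Pi.single_apply, ht]
        · intro h; exact absurd (Finset.mem_univ _) h
      have s10 : ∑ t, xθ t * (Pi.single 0 1 : Fin (m+3) → ℝ) t = Real.cos θ := by
        rw [Finset.sum_eq_single (0 : Fin (m+3))]
        · simp [hx0]
        · intro t _ ht; simp [Pi.single_apply, ht]
        · intro h; exact absurd (Finset.mem_univ _) h
      have s11 : ∑ t, xθ t * xθ t = 1 := by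
        rw [aux_sum_two _ h01 (fun i hi0 hi1 => by rw [hxo i hi0 hi1]; ring)]
        rw [hx0, hx1]; nlinarith
      rw [s00, s01, s10, s11]
      rw [show (1:ℝ) * 1 - Real.cos θ * Real.cos θ = Real.sin θ ^ 2 by nlinarith]
      exact Real.sqrt_sq hs.le
    rw [hgram, habs]
    apply Real.rpow_lt_rpow_of_exponent_gt hs hs1
    have h2 : (2:ℝ) < ((m+3 : ℕ) : ℝ) := by exact_mod_cast (by omega : 2 < m + 3)
    exact one_div_lt_one_div_of_lt (by norm_num) h2
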